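/- For every integer m ≥ 1, every nonzero real number can be written as the product of two m-ultra numbers. -/

import Mathlib

open Polynomial

/-- The primitive minimal polynomial over ℤ of a real number. -/
noncomputable def intMinpoly (α : ℝ) : Polynomial ℤ :=
  (IsLocalization.integerNormalization (nonZeroDivisors ℤ) (minpoly ℚ α)).primPart

/-- The height of an algebraic number: the maximum of the absolute values of the
coefficients of its primitive minimal polynomial over ℤ. -/
noncomputable def algHeight (α : ℝ) : ℕ :=
  (intMinpoly α).support.sup fun i => ((intMinpoly α).coeff i).natAbs

/-- `α` is a real algebraic number of degree exactly `m`. -/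
def DegreeExactly (m : ℕ) (α : ℝ) : Prop :=
  IsAlgebraic ℚ α ∧ (minpoly ℚ α).natDegree = m

/-- `exp^[3](x) = e^(e^(e^x))`. -/
noncomputable def expCube (x : ℝ) : ℝ := Real.exp (Real.exp (Real.exp x))

/-- `ξ` is an `m`-ultra number: there is a sequence `(α_n)_{n ≥ 1}` of pairwise distinct
real algebraic numbers of degree exactly `m` with
`0 < |ξ - α_n| < (exp^[3](H(α_n)))^{-n}` for all `n ≥ 1`. Here `a k` plays the
role of `α_{k+1}`. -/
def IsMUltra (m : ℕ) (ξ : ℝ) : Prop :=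
  ∃ a : ℕ → ℝ, Function.Injective a ∧
    ∀ n : ℕ, DegreeExactly m (a n) ∧ 0 < |ξ - a n| ∧
      |ξ - a n| < (expCube (algHeight (a n)))⁻¹ ^ (n + 1)

/-- A function `f : ℝ → ℝ` is transcendental if the only complex two-variable polynomial
`P` with `P (x, f x) = 0` for all real `x` is the zero polynomial. -/
def TranscendentalFun (f : ℝ → ℝ) : Prop :=
  ∀ P : MvPolynomial (Fin 2) ℂ,
    (∀ x : ℝ, MvPolynomial.eval ![(x : ℂ), (f x : ℂ)] P = 0) → P = 0

lemma eisen2 (m : ℕ) (hm : 1 ≤ m) : Irreducible (X ^ m - C (2:ℤ)) := by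
  have hdeg : (X ^ m - C (2:ℤ)).degree = (m : WithBot ℕ) := by
    exact degree_X_pow_sub_C (by omega : 0 < m) (2:ℤ)
  have hmonic : (X ^ m - C (2:ℤ)).Monic := monic_X_pow_sub_C _ (by omega)
  have hc : ∀ n, (X ^ m - C (2:ℤ)).coeff n
      = (if n = m then 1 else 0) - (if n = 0 then 2 else 0) := by
    intro n; rw [coeff_sub, coeff_X_pow, coeff_C]
  apply irreducible_of_eisenstein_criterion
    (Ideal.span_singleton_prime (by norm_num : (2:ℤ) ≠ 0) |>.mpr Int.prime_two)
  · rw [hmonic.leadingCoeff]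
    simp [Ideal.mem_span_singleton]
  · intro n hn
    rw [hdeg] at hn
    have hnm : n < m := by exact_mod_cast hn
    rw [hc, if_neg hnm.ne, Ideal.mem_span_singleton]
    rcases eq_or_ne n 0 with rfl | h
    · norm_num
    · simp [h]
  · rw [hdeg]; exact_mod_cast (by omega : 0 < m)
  · rw [Ideal.span_singleton_pow, hc, if_neg (by omega : ¬ (0:ℕ) = m), Ideal.mem_span_singleton]
    norm_num
  · exact hmonic.isPrimitive

lemma irredQ (m : ℕ) (hm : 1 ≤ m) : Irreducible (X ^ m - C (2:ℚ)) := by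
  have h := (monic_X_pow_sub_C (2:ℤ) (by omega : m ≠ 0)).irreducible_iff_irreducible_map_fraction_map (K := ℚ) |>.mp (eisen2 m hm)
  rw [show (C (2:ℚ) : ℚ[X]) = 2 from map_ofNat C 2]
  simpa using h

noncomputable def rt (m : ℕ) : ℝ := (2:ℝ) ^ ((m:ℝ)⁻¹)

lemma rt_pow (m : ℕ) (hm : 1 ≤ m) : (rt m) ^ m = 2 :=
  Real.rpow_inv_natCast_pow (by norm_num) (by omega)

lemma minpoly_rt (m : ℕ) (hm : 1 ≤ m) : minpoly ℚ (rt m) = X ^ m - C (2:ℚ) := by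
  refine (minpoly.eq_of_irreducible_of_monic (x := rt m) (irredQ m hm) ?_ (monic_X_pow_sub_C _ (by omega))).symm
  simp [rt_pow m hm]

lemma degreeExactly_rat_add (m : ℕ) (hm : 1 ≤ m) (q : ℚ) :
    DegreeExactly m ((q : ℝ) + rt m) := by
  have hint : IsIntegral ℚ (rt m) := by
    refine ⟨X ^ m - C (2:ℚ), monic_X_pow_sub_C _ (by omega), ?_⟩
    simp [rt_pow m hm]
  constructor
  · exact (isAlgebraic_iff_isIntegral.mpr ((isIntegral_algebraMap (x := q)).add hint))
  · have : (q : ℝ) + rt m = rt m + algebraMap ℚ ℝ q := by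
      simp [add_comm]
    rw [this, minpoly.add_algebraMap, natDegree_comp, minpoly_rt m hm]
    simp [natDegree_X_pow_sub_C]

lemma one_lt_expCube (y : ℝ) : 1 < expCube y := by
  have h : 0 < Real.exp (Real.exp y) := Real.exp_pos _
  exact Real.one_lt_exp_iff.mpr h

lemma r_pos (α : ℝ) : 0 < (expCube (algHeight α))⁻¹ := by
  have := Real.exp_pos (Real.exp (Real.exp (algHeight α : ℝ)))
  exact inv_pos.mpr this

lemma r_lt_one (α : ℝ) : (expCube (algHeight α))⁻¹ < 1 := by
  have h : 1 < expCube (algHeight α) := one_lt_expCube _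
  exact inv_lt_one_of_one_lt₀ h

open Filter in
lemma mem_ultra (m : ℕ) (ξ : ℝ)
    (h : ∀ n : ℕ, ∃ α, DegreeExactly m α ∧ 0 < |ξ - α| ∧
      |ξ - α| < (expCube (algHeight α))⁻¹ ^ (n + 1)) : IsMUltra m ξ := by
  choose w hw1 hw2 hw3 using h
  -- strengthened selection avoiding a finite set
  have H : ∀ (s : Finset ℝ) (n : ℕ), ∃ α, α ∉ s ∧ DegreeExactly m α ∧ 0 < |ξ - α| ∧
      |ξ - α| < (expCube (algHeight α))⁻¹ ^ (n + 1) := by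
    intro s n
    have hev : ∀ᶠ k in atTop, ∀ v ∈ s, w k ≠ v := by
      rw [eventually_all_finset]
      intro v _
      by_cases hv : 0 < |ξ - v|
      · have htend : Tendsto (fun k : ℕ => (expCube (algHeight v))⁻¹ ^ (k + 1)) atTop (nhds 0) := by
          have h0 : Tendsto (fun k : ℕ => (expCube (algHeight v))⁻¹ ^ k) atTop (nhds 0) :=
            tendsto_pow_atTop_nhds_zero_of_lt_one (le_of_lt (r_pos v)) (r_lt_one v)
          exact h0.comp (tendsto_add_atTop_nat 1)
        filter_upwards [htend.eventually (gt_mem_nhds hv)] with k hk hkv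
        have h3 := hw3 k
        rw [hkv] at h3
        exact absurd (h3.trans hk) (lt_irrefl _)
      · filter_upwards with k hkv
        have h2 := hw2 k
        rw [hkv] at h2
        exact hv h2
    obtain ⟨K, hK⟩ := hev.exists_forall_of_atTop
    refine ⟨w (max K n), ?_, hw1 _, hw2 _, ?_⟩
    · intro hmem
      exact hK (max K n) (le_max_left _ _) _ hmem rfl
    · refine (hw3 (max K n)).trans_le ?_
      exact pow_le_pow_of_le_one (le_of_lt (r_pos _)) (le_of_lt (r_lt_one _))
        (Nat.add_le_add_right (le_max_right K n) 1)
  choose F hFs hF1 hF2 hF3 using H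
  let g : ℕ → ℝ × Finset ℝ := fun n =>
    Nat.rec (F ∅ 0, {F ∅ 0}) (fun k p => (F p.2 (k + 1), insert (F p.2 (k + 1)) p.2)) n
  have hgsucc : ∀ n, g (n + 1) = (F (g n).2 (n + 1), insert (F (g n).2 (n + 1)) (g n).2) :=
    fun n => rfl
  have hmem : ∀ n, (g n).1 ∈ (g n).2 := by
    intro n
    cases n with
    | zero => exact Finset.mem_singleton_self _
    | succ k => rw [hgsucc]; exact Finset.mem_insert_self _ _
  have hmono : Monotone fun n => (g n).2 := by
    apply monotone_nat_of_le_succ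
    intro n
    rw [hgsucc]
    exact Finset.subset_insert _ _
  have hnot : ∀ n, (g (n + 1)).1 ∉ (g n).2 := by
    intro n
    rw [hgsucc]
    exact hFs (g n).2 (n + 1)
  refine ⟨fun n => (g n).1, ?_, ?_⟩
  · have key : ∀ i j, i < j → (g i).1 ≠ (g j).1 := by
      intro i j hij heq
      obtain ⟨k, rfl⟩ := Nat.exists_eq_add_of_lt hij
      have h1 : (g i).1 ∈ (g (i + k)).2 := hmono (Nat.le_add_right i k) (hmem i)
      rw [heq] at h1
      exact hnot (i + k) h1
    intro i j hij
    by_contra hne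
    rcases lt_or_gt_of_ne hne with h | h
    · exact key i j h hij
    · exact key j i h hij.symm
  · intro n
    cases n with
    | zero => exact ⟨hF1 ∅ 0, hF2 ∅ 0, hF3 ∅ 0⟩
    | succ k =>
      show DegreeExactly m (g (k+1)).1 ∧ _ ∧ _
      rw [hgsucc k]
      exact ⟨hF1 (g k).2 (k + 1), hF2 (g k).2 (k + 1), hF3 (g k).2 (k + 1)⟩

/-- The `n`-th approximation set. -/
def USet (m n : ℕ) : Set ℝ :=
  ⋃ α ∈ {α : ℝ | DegreeExactly m α},
    Metric.ball α ((expCube (algHeight α))⁻¹ ^ (n + 1)) \ {α}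

lemma mem_USet_iff {m n : ℕ} {y : ℝ} :
    y ∈ USet m n ↔ ∃ α, DegreeExactly m α ∧ 0 < |y - α| ∧
      |y - α| < (expCube (algHeight α))⁻¹ ^ (n + 1) := by
  simp only [USet, Set.mem_iUnion, Set.mem_diff, Metric.mem_ball, Set.mem_singleton_iff,
    Set.mem_setOf_eq, Real.dist_eq, exists_prop]
  constructor
  · rintro ⟨α, hα, hlt, hne⟩
    exact ⟨α, hα, abs_pos.mpr (sub_ne_zero.mpr hne), hlt⟩
  · rintro ⟨α, hα, hpos, hlt⟩
    exact ⟨α, hα, hlt, sub_ne_zero.mp (abs_pos.mp hpos)⟩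

lemma isOpen_USet (m n : ℕ) : IsOpen (USet m n) :=
  isOpen_biUnion fun α _ => Metric.isOpen_ball.sdiff isClosed_singleton

lemma exists_deg_near (m : ℕ) (hm : 1 ≤ m) (t : ℝ) {ε : ℝ} (hε : 0 < ε) :
    ∃ α, DegreeExactly m α ∧ |α - t| < ε := by
  obtain ⟨q, hq⟩ := exists_rat_near (t - rt m) hε
  refine ⟨(q : ℝ) + rt m, degreeExactly_rat_add m hm q, ?_⟩
  have : ((q : ℝ) + rt m) - t = -((t - rt m) - q) := by ring
  rw [this, abs_neg]
  exact hq

lemma dense_USet (m : ℕ) (hm : 1 ≤ m) (n : ℕ) : Dense (USet m n) := by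
  rw [Metric.dense_iff]
  intro t ε hε
  obtain ⟨α, hα, hαt⟩ := exists_deg_near m hm t (half_pos hε)
  set δ := min (ε / 2) ((expCube (algHeight α))⁻¹ ^ (n + 1)) with hδdef
  have hδpos : 0 < δ := lt_min (half_pos hε) (pow_pos (r_pos α) _)
  refine ⟨α + δ / 2, ?_, ?_⟩
  · rw [Metric.mem_ball, Real.dist_eq]
    have : α + δ / 2 - t = (α - t) + δ / 2 := by ring
    rw [this]
    calc |(α - t) + δ / 2| ≤ |α - t| + |δ / 2| := abs_add_le _ _
      _ < ε / 2 + ε / 2 := by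
          apply add_lt_add_of_lt_of_le hαt
          rw [abs_of_pos (half_pos hδpos)]
          have := min_le_left (ε / 2) ((expCube (algHeight α))⁻¹ ^ (n + 1))
          linarith
      _ = ε := add_halves ε
  · rw [mem_USet_iff]
    refine ⟨α, hα, ?_, ?_⟩
    · rw [show α + δ / 2 - α = δ / 2 by ring, abs_of_pos (half_pos hδpos)]
      exact half_pos hδpos
    · rw [show α + δ / 2 - α = δ / 2 by ring, abs_of_pos (half_pos hδpos)]
      have := min_le_right (ε / 2) ((expCube (algHeight α))⁻¹ ^ (n + 1))
      linarith

lemma isOpen_VSet (m n : ℕ) (x : ℝ) : IsOpen {a : ℝ | a ≠ 0 ∧ x / a ∈ USet m n} := by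
  rw [isOpen_iff_mem_nhds]
  rintro a ⟨ha0, haU⟩
  have hc : ContinuousAt (fun a : ℝ => x / a) a := continuousAt_const.div continuousAt_id ha0
  have h1 : (fun a : ℝ => x / a) ⁻¹' (USet m n) ∈ nhds a :=
    hc.preimage_mem_nhds ((isOpen_USet m n).mem_nhds haU)
  have h2 : {b : ℝ | b ≠ 0} ∈ nhds a := isOpen_ne.mem_nhds ha0
  filter_upwards [h1, h2] with b hb1 hb2
  exact ⟨hb2, hb1⟩

lemma dense_VSet (m : ℕ) (hm : 1 ≤ m) (n : ℕ) (x : ℝ) (hx : x ≠ 0) :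
    Dense {a : ℝ | a ≠ 0 ∧ x / a ∈ USet m n} := by
  have key : ∀ t' : ℝ, t' ≠ 0 → ∀ ε' > (0:ℝ),
      ∃ a : ℝ, (a ≠ 0 ∧ x / a ∈ USet m n) ∧ |a - t'| < ε' := by
    intro t' ht' ε' hε'
    set u₀ : ℝ := x / t' with hu₀def
    have hu₀ : u₀ ≠ 0 := div_ne_zero hx ht'
    have hval : x / u₀ = t' := by rw [hu₀def]; field_simp
    have hT : Filter.Tendsto (fun u : ℝ => x / u) (nhds u₀) (nhds t') := by
      have h := Filter.Tendsto.div (tendsto_const_nhds (x := x)) Filter.tendsto_id hu₀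
      rwa [hval] at h
    have hE : {u : ℝ | u ≠ 0 ∧ |x / u - t'| < ε'} ∈ nhds u₀ := by
      have hball : ∀ᶠ u in nhds u₀, |x / u - t'| < ε' := by
        have : ∀ᶠ y in nhds t', |y - t'| < ε' := by
          have := Metric.ball_mem_nhds t' hε'
          filter_upwards [this] with y hy
          rwa [Metric.mem_ball, Real.dist_eq] at hy
        exact hT.eventually this
      filter_upwards [hball, isOpen_ne.mem_nhds hu₀] with u h1 h2
      exact ⟨h2, h1⟩
    obtain ⟨u, huE, huU⟩ := mem_closure_iff_nhds.mp (dense_USet m hm n u₀) _ hE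
    refine ⟨x / u, ⟨div_ne_zero hx huE.1, ?_⟩, ?_⟩
    · have : x / (x / u) = u := by field_simp
      rwa [this]
    · exact huE.2
  rw [Metric.dense_iff]
  intro t ε hε
  obtain ⟨t', ht'0, ht't⟩ : ∃ t' : ℝ, t' ≠ 0 ∧ |t' - t| < ε / 2 := by
    rcases eq_or_ne t 0 with rfl | ht
    · exact ⟨ε / 4, by positivity, by rw [sub_zero, abs_of_pos (by positivity)]; linarith⟩
    · exact ⟨t, ht, by simpa using half_pos hε⟩
  obtain ⟨a, haS, hat'⟩ := key t' ht'0 (ε / 2) (half_pos hε)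
  refine ⟨a, ?_, haS⟩
  rw [Metric.mem_ball, Real.dist_eq]
  calc |a - t| = |(a - t') + (t' - t)| := by ring_nf
    _ ≤ |a - t'| + |t' - t| := abs_add_le _ _
    _ < ε / 2 + ε / 2 := add_lt_add hat' ht't
    _ = ε := add_halves ε


/-- Every nonzero real number is the product of two `m`-ultra numbers. -/
theorem stmt_6 (m : ℕ) (hm : 1 ≤ m) (x : ℝ) (hx : x ≠ 0) :
    ∃ a b : ℝ, IsMUltra m a ∧ IsMUltra m b ∧ x = a * b := by
  set W : ℕ → Set ℝ := fun n => USet m n ∩ {a : ℝ | a ≠ 0 ∧ x / a ∈ USet m n} with hW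
  have hWopen : ∀ n, IsOpen (W n) := fun n => (isOpen_USet m n).inter (isOpen_VSet m n x)
  have hWdense : ∀ n, Dense (W n) := fun n =>
    (Dense.inter_of_isOpen_left (dense_USet m hm n) (dense_VSet m hm n x hx) (isOpen_USet m n))
  obtain ⟨a, ha⟩ := (dense_iInter_of_isOpen hWopen hWdense).nonempty
  have haW : ∀ n, a ∈ W n := fun n => Set.mem_iInter.mp ha n
  have ha0 : a ≠ 0 := (haW 0).2.1
  refine ⟨a, x / a, ?_, ?_, ?_⟩
  · exact mem_ultra m a fun n => mem_USet_iff.mp (haW n).1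
  · exact mem_ultra m (x / a) fun n => mem_USet_iff.mp (haW n).2.2
  · field_simp
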